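/- The rational map Φ: ℂ³ → ℂ³ given by x₁ = (x̃₁+x̃₃)/2, x₂ = x̃₂, x₃ = [x̃₂(x̃₁+x̃₃) − 2x̃₁x̃₃]/[2x̃₂ − (x̃₁+x̃₃)] is solution-preserving from gDH(ã₁,ã₂,ã₁; b̃₁,b̃₂,b̃₁; c̃) to gDH(2ã₁, ã₂, 2ã₁+ã₂−c̃; c̃−b̃₂, b̃₂, 2b̃₁+b̃₂−c̃; c̃): if x̃(τ) solves the first system with 2x̃₂(τ) − x̃₁(τ) − x̃₃(τ) ≠ 0 on its domain, then x(τ) := Φ(x̃(τ)) solves the second. -/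

import Mathlib

set_option maxHeartbeats 4000000 in
/-- the quadratic map `Φ` is solution-preserving from
`gDH(ã₁,ã₂,ã₁; b̃₁,b̃₂,b̃₁; c̃)` to
`gDH(2ã₁, ã₂, 2ã₁+ã₂−c̃; c̃−b̃₂, b̃₂, 2b̃₁+b̃₂−c̃; c̃)`. -/
theorem stmt_8 (at₁ at₂ bt₁ bt₂ ct : ℂ) (U : Set ℂ)
    (y₁ y₂ y₃ x₁ x₂ x₃ : ℂ → ℂ)
    (hx₁ : ∀ s, x₁ s = (y₁ s + y₃ s) / 2)
    (hx₂ : ∀ s, x₂ s = y₂ s)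
    (hx₃ : ∀ s, x₃ s = (y₂ s * (y₁ s + y₃ s) - 2 * y₁ s * y₃ s)
        / (2 * y₂ s - (y₁ s + y₃ s)))
    (hden : ∀ τ ∈ U, 2 * y₂ τ - (y₁ τ + y₃ τ) ≠ 0)
    (hsol : ∀ τ ∈ U,
      HasDerivAt y₁ (-at₁ * (y₁ τ - y₂ τ) * (y₃ τ - y₁ τ)
        + (bt₁ * y₂ τ * y₃ τ + bt₂ * y₃ τ * y₁ τ + bt₁ * y₁ τ * y₂ τ)
        - ct * (y₂ τ * y₃ τ)) τ ∧
      HasDerivAt y₂ (-at₂ * (y₂ τ - y₃ τ) * (y₁ τ - y₂ τ)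
        + (bt₁ * y₂ τ * y₃ τ + bt₂ * y₃ τ * y₁ τ + bt₁ * y₁ τ * y₂ τ)
        - ct * (y₃ τ * y₁ τ)) τ ∧
      HasDerivAt y₃ (-at₁ * (y₃ τ - y₁ τ) * (y₂ τ - y₃ τ)
        + (bt₁ * y₂ τ * y₃ τ + bt₂ * y₃ τ * y₁ τ + bt₁ * y₁ τ * y₂ τ)
        - ct * (y₁ τ * y₂ τ)) τ) :
    ∀ τ ∈ U,
      HasDerivAt x₁ (-(2 * at₁) * (x₁ τ - x₂ τ) * (x₃ τ - x₁ τ)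
        + ((ct - bt₂) * x₂ τ * x₃ τ + bt₂ * x₃ τ * x₁ τ
            + (2 * bt₁ + bt₂ - ct) * x₁ τ * x₂ τ)
        - ct * (x₂ τ * x₃ τ)) τ ∧
      HasDerivAt x₂ (-at₂ * (x₂ τ - x₃ τ) * (x₁ τ - x₂ τ)
        + ((ct - bt₂) * x₂ τ * x₃ τ + bt₂ * x₃ τ * x₁ τ
            + (2 * bt₁ + bt₂ - ct) * x₁ τ * x₂ τ)
        - ct * (x₃ τ * x₁ τ)) τ ∧
      HasDerivAt x₃ (-(2 * at₁ + at₂ - ct) * (x₃ τ - x₁ τ) * (x₂ τ - x₃ τ)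
        + ((ct - bt₂) * x₂ τ * x₃ τ + bt₂ * x₃ τ * x₁ τ
            + (2 * bt₁ + bt₂ - ct) * x₁ τ * x₂ τ)
        - ct * (x₁ τ * x₂ τ)) τ := by
  intro τ hτ
  obtain ⟨h1, h2, h3⟩ := hsol τ hτ
  have hd := hden τ hτ
  have hX1 : x₁ = fun s => (y₁ s + y₃ s) / 2 := funext hx₁
  have hX2 : x₂ = y₂ := funext hx₂
  have hX3 : x₃ = fun s => (y₂ s * (y₁ s + y₃ s) - 2 * y₁ s * y₃ s)
      / (2 * y₂ s - (y₁ s + y₃ s)) := funext hx₃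
  refine ⟨?_, ?_, ?_⟩
  · rw [hX1]
    have h := (h1.add h3).div_const 2
    convert h using 1 <;> try rfl
    simp only [hx₁, hx₂, hx₃]
    set q := (y₂ τ * (y₁ τ + y₃ τ) - 2 * y₁ τ * y₃ τ) / (2 * y₂ τ - (y₁ τ + y₃ τ)) with hqdef
    have hq : q * (2 * y₂ τ - (y₁ τ + y₃ τ)) = y₂ τ * (y₁ τ + y₃ τ) - 2 * y₁ τ * y₃ τ :=
      div_mul_cancel₀ _ hd
    linear_combination (at₁ - bt₂ / 2) * hq
  · rw [hX2]
    convert h2 using 1 <;> try rfl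
    simp only [hx₁, hx₂, hx₃]
    set q := (y₂ τ * (y₁ τ + y₃ τ) - 2 * y₁ τ * y₃ τ) / (2 * y₂ τ - (y₁ τ + y₃ τ)) with hqdef
    have hq : q * (2 * y₂ τ - (y₁ τ + y₃ τ)) = y₂ τ * (y₁ τ + y₃ τ) - 2 * y₁ τ * y₃ τ :=
      div_mul_cancel₀ _ hd
    linear_combination ((ct - bt₂ - at₂) / 2) * hq
  · rw [hX3]
    have hN := (h2.mul (h1.add h3)).sub ((h1.const_mul 2).mul h3)
    have hD := (h2.const_mul 2).sub (h1.add h3)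
    have h := hN.div hD hd
    convert h using 1 <;> try rfl
    simp only [hx₁, hx₂, hx₃, Pi.add_apply, Pi.sub_apply, Pi.mul_apply]
    rw [eq_div_iff (pow_ne_zero 2 hd)]
    set q := (y₂ τ * (y₁ τ + y₃ τ) - 2 * y₁ τ * y₃ τ) / (2 * y₂ τ - (y₁ τ + y₃ τ)) with hqdef
    have hq : q * (2 * y₂ τ - (y₁ τ + y₃ τ)) = y₂ τ * (y₁ τ + y₃ τ) - 2 * y₁ τ * y₃ τ :=
      div_mul_cancel₀ _ hd
    linear_combination
      (-(2 * at₁ + at₂ - ct) *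
          (((y₁ τ + y₃ τ) / 2) * (2 * y₂ τ - (y₁ τ + y₃ τ))
            + y₂ τ * (2 * y₂ τ - (y₁ τ + y₃ τ))
            - q * (2 * y₂ τ - (y₁ τ + y₃ τ))
            - (y₂ τ * (y₁ τ + y₃ τ) - 2 * y₁ τ * y₃ τ))
        + ((ct - bt₂) * y₂ τ + bt₂ * ((y₁ τ + y₃ τ) / 2)) * (2 * y₂ τ - (y₁ τ + y₃ τ)))
        * hq
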